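/- arXiv:1206.3026 — 3 statements merged into one kernel-verified Lean document; each statement's English description precedes it below -/
import Mathlib

section
/- The composition T = P ∥ Q of two composable transition systems satisfies constraint 1: for each state (s_P,s_Q) of T and each set A of input events of T, there is exactly one transition from (s_P,s_Q) whose label matches A. -/
open Classical

noncomputable section

abbrev BExpr (E : Type) := (E → Bool) → Bool

def DependsOn' {E : Type} (l : BExpr E) (V : Set E) : Prop :=
  ∀ σ τ : E → Bool, (∀ a ∈ V, σ a = τ a) → l σ = l τ

def IsFullConj {E : Type} (l : BExpr E) (V : Set E) : Prop :=
  ∃ p : E → Bool, ∀ σ : E → Bool, (l σ = true ↔ ∀ a ∈ V, σ a = p a)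

def Matches' {E : Type} (I : Set E) (l : BExpr E) (A : Set E) : Prop :=
  ∃ σ : E → Bool, (∀ a ∈ I, (σ a = true ↔ a ∈ A)) ∧ l σ = true

def Sat {E : Type} (l : BExpr E) : Prop := ∃ σ, l σ = true

structure TS (E : Type) where
  S : Type
  i : S
  Ev : Set E
  I : Set E
  Tran : Set (S × BExpr E × S)

namespace TS

variable {E : Type}

/-- Constraint 1: determinism/totality of matching. -/
def C1 (T : TS E) : Prop :=
  ∀ s : T.S, ∀ A : Set E, A ⊆ T.I →
    ∃! t : BExpr E × T.S, ((s, t.1, t.2) ∈ T.Tran ∧ Matches' T.I t.1 A)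

/-- Constraint 2: every label has the form x·y, x ∈ Bool(I), y ∈ Conj(E∖I). -/
def C2 (T : TS E) : Prop :=
  ∀ ⦃s : T.S⦄ ⦃l : BExpr E⦄ ⦃s' : T.S⦄, (s, l, s') ∈ T.Tran →
    ∃ x y : BExpr E, DependsOn' x T.I ∧ IsFullConj y (T.Ev \ T.I) ∧
      ∀ σ, l σ = (x σ && y σ)

inductive Reach (T : TS E) : T.S → Prop
  | init : Reach T T.i
  | step {s : T.S} {l : BExpr E} {s' : T.S} :
      Reach T s → (s, l, s') ∈ T.Tran → Sat l → Reach T s'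

/-- Constraint 3: all states reachable. -/
def C3 (T : TS E) : Prop := ∀ s : T.S, Reach T s

/-- Constraint 4: a single output subexpression per state. -/
def C4 (T : TS E) : Prop :=
  ∀ s : T.S, ∃ y : BExpr E, IsFullConj y (T.Ev \ T.I) ∧
    ∀ ⦃l : BExpr E⦄ ⦃s' : T.S⦄, (s, l, s') ∈ T.Tran →
      ∃ x : BExpr E, DependsOn' x T.I ∧ ∀ σ, l σ = (x σ && y σ)

def WF (T : TS E) : Prop := T.I ⊆ T.Ev

/-- θ / hiding of shared variables: existentially quantify them away. -/
def hide (H : Set E) (l : BExpr E) : BExpr E :=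
  fun σ => decide (∃ τ : E → Bool, (∀ a ∉ H, τ a = σ a) ∧ l τ = true)

/-- Product T' = P × Q. -/
def prod (P Q : TS E) : TS E where
  S := P.S × Q.S
  i := (P.i, Q.i)
  Ev := P.Ev ∪ Q.Ev
  I := P.I ∪ Q.I
  Tran := { t | ∃ lP lQ : BExpr E,
      (t.1.1, lP, t.2.2.1) ∈ P.Tran ∧ (t.1.2, lQ, t.2.2.2) ∈ Q.Tran ∧
      t.2.1 = fun σ => lP σ && lQ σ }

/-- Composition T = P ∥ Q: satisfiable product transitions with shared events hidden. -/
def comp (P Q : TS E) : TS E where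
  S := P.S × Q.S
  i := (P.i, Q.i)
  Ev := (P.Ev ∪ Q.Ev) \ (P.Ev ∩ Q.Ev)
  I := (P.I ∪ Q.I) \ (P.Ev ∩ Q.Ev)
  Tran := { t | ∃ lP lQ : BExpr E,
      (t.1.1, lP, t.2.2.1) ∈ P.Tran ∧ (t.1.2, lQ, t.2.2.2) ∈ Q.Tran ∧
      Sat (fun σ => lP σ && lQ σ) ∧
      t.2.1 = hide (P.Ev ∩ Q.Ev) (fun σ => lP σ && lQ σ) }

/-- Condition D: every shared event is an input of exactly one of the systems. -/
def SharedOK (P Q : TS E) : Prop :=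
  ∀ a ∈ P.Ev ∩ Q.Ev, (a ∈ P.I ∧ a ∉ Q.I) ∨ (a ∈ Q.I ∧ a ∉ P.I)

def Composable (P Q : TS E) : Prop :=
  P.WF ∧ Q.WF ∧ P.C1 ∧ P.C2 ∧ P.C3 ∧ Q.C1 ∧ Q.C2 ∧ Q.C3 ∧ SharedOK P Q ∧
  (P.C4 ∨ Q.C4) ∧
  (¬ P.C4 → P.Ev ∩ Q.Ev = P.Ev \ P.I) ∧
  (¬ Q.C4 → P.Ev ∩ Q.Ev = Q.Ev \ Q.I)

/-- A run of the system under input sequence A. -/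
def Run (T : TS E) (A : ℕ → Set E) (r : ℕ → T.S) : Prop :=
  r 0 = T.i ∧ ∀ n : ℕ, ∃ l : BExpr E,
    (r n, l, r (n + 1)) ∈ T.Tran ∧ Matches' T.I l (A n)

/-- Output event e occurs at time t of the run. -/
def EmitsAt (T : TS E) (A : ℕ → Set E) (r : ℕ → T.S) (e : E) (t : ℕ) : Prop :=
  ∃ l : BExpr E, (r t, l, r (t + 1)) ∈ T.Tran ∧ Matches' T.I l (A t) ∧
    ∀ σ : E → Bool, l σ = true → σ e = true

end TS
section Aux

open TS

variable {E : Type}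

private lemma beq_iff {a b : Bool} (h : (a = true) ↔ (b = true)) : a = b := by
  cases a <;> cases b <;> simp_all

private lemma and_pattern {l x y : BExpr E} {V : Set E} {pp : E → Bool}
    (hl : ∀ σ, l σ = (x σ && y σ))
    (hy : ∀ σ : E → Bool, (y σ = true ↔ ∀ a ∈ V, σ a = pp a))
    {σ : E → Bool} (hσ : l σ = true) : x σ = true ∧ ∀ a ∈ V, σ a = pp a := by
  have h1 : (x σ && y σ) = true := by rw [← hl σ]; exact hσ
  obtain ⟨h1, h2⟩ := Bool.and_eq_true_iff.mp h1
  exact ⟨h1, (hy σ).mp h2⟩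

theorem aux_c1 (P Q : TS E) (hwP : P.WF) (hwQ : Q.WF)
    (hc1P : P.C1) (hc2P : P.C2) (hc1Q : Q.C1) (hc2Q : Q.C2)
    (hsh : SharedOK P Q)
    (sP : P.S) (sQ : Q.S) (p : E → Bool)
    (hp : ∀ ⦃lQ : BExpr E⦄ ⦃sQ' : Q.S⦄, (sQ, lQ, sQ') ∈ Q.Tran →
        ∀ τ : E → Bool, lQ τ = true →
        ∀ a ∈ P.Ev ∩ Q.Ev, a ∈ P.I → τ a = p a)
    (A : Set E) (hA : A ⊆ (TS.comp P Q).I) :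
    ∃! t : BExpr E × (P.S × Q.S),
      (((sP, sQ), t.1, t.2) ∈ (TS.comp P Q).Tran ∧ Matches' (TS.comp P Q).I t.1 A) := by
  classical
  have hAnotH : ∀ a ∈ A, a ∉ P.Ev ∩ Q.Ev := fun a ha => (hA ha).2
  set AP : Set E := {a | a ∈ P.I ∧ (a ∈ A ∨ (a ∈ P.Ev ∩ Q.Ev ∧ p a = true))} with hAPdef
  obtain ⟨tP, ⟨htP, hmP⟩, huP⟩ := hc1P sP AP (fun a ha => ha.1)
  obtain ⟨xP, yP, hxP, ⟨pP, hyP⟩, hlP⟩ := hc2P htP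
  set AQ : Set E := {a | a ∈ Q.I ∧ (a ∈ A ∨ (a ∈ P.Ev ∩ Q.Ev ∧ pP a = true))} with hAQdef
  obtain ⟨tQ, ⟨htQ, hmQ⟩, huQ⟩ := hc1Q sQ AQ (fun a ha => ha.1)
  obtain ⟨xQ, yQ, hxQ, ⟨pQ, hyQ⟩, hlQ⟩ := hc2Q htQ
  obtain ⟨σP, hσP, hσPl⟩ := hmP
  obtain ⟨σQ, hσQ, hσQl⟩ := hmQ
  have hxPσ := and_pattern hlP hyP hσPl
  have hxQσ := and_pattern hlQ hyQ hσQl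
  -- p agrees with pQ on shared inputs of P
  have hpq : ∀ a ∈ P.Ev ∩ Q.Ev, a ∈ P.I → pQ a = p a := by
    intro a ha haI
    have h1 : σQ a = p a := hp htQ σQ hσQl a ha haI
    have hnq : a ∉ Q.I := by
      rcases hsh a ha with ⟨_, hq⟩ | ⟨_, hnp⟩
      · exact hq
      · exact absurd haI hnp
    have h2 : σQ a = pQ a := hxQσ.2 a ⟨ha.2, hnq⟩
    rw [← h2, h1]
  set τ0 : E → Bool := fun a =>
    if a ∈ P.Ev \ P.I then pP a else if a ∈ Q.Ev \ Q.I then pQ a else decide (a ∈ A)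
    with hτ0def
  have hagP : ∀ a ∈ P.I, τ0 a = σP a := by
    intro a haI
    have h1 : a ∉ P.Ev \ P.I := fun h => h.2 haI
    by_cases h2 : a ∈ Q.Ev \ Q.I
    · have haH : a ∈ P.Ev ∩ Q.Ev := ⟨hwP haI, h2.1⟩
      have hσ : σP a = true ↔ a ∈ AP := hσP a haI
      have hAPa : a ∈ AP ↔ p a = true := by
        constructor
        · rintro ⟨_, h | h⟩
          · exact absurd haH (hAnotH a h)
          · exact h.2
        · intro h; exact ⟨haI, Or.inr ⟨haH, h⟩⟩
      have hv : τ0 a = pQ a := by simp only [hτ0def]; rw [if_neg h1, if_pos h2]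
      rw [hv, hpq a haH haI]
      exact beq_iff (hAPa.symm.trans hσ.symm)
    · have hnH : a ∉ P.Ev ∩ Q.Ev := by
        intro haH
        rcases hsh a haH with ⟨_, hq⟩ | ⟨_, hnp⟩
        · exact h2 ⟨haH.2, hq⟩
        · exact hnp haI
      have hv : τ0 a = decide (a ∈ A) := by simp only [hτ0def]; rw [if_neg h1, if_neg h2]
      have hAPa : a ∈ AP ↔ a ∈ A := by
        constructor
        · rintro ⟨_, h | h⟩
          · exact h
          · exact absurd h.1 hnH
        · intro h; exact ⟨haI, Or.inl h⟩
      rw [hv]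
      refine beq_iff ?_
      rw [decide_eq_true_eq]
      exact hAPa.symm.trans (hσP a haI).symm
  have hagQ : ∀ a ∈ Q.I, τ0 a = σQ a := by
    intro a haI
    have h2 : a ∉ Q.Ev \ Q.I := fun h => h.2 haI
    by_cases h1 : a ∈ P.Ev \ P.I
    · have haH : a ∈ P.Ev ∩ Q.Ev := ⟨h1.1, hwQ haI⟩
      have hAQa : a ∈ AQ ↔ pP a = true := by
        constructor
        · rintro ⟨_, h | h⟩
          · exact absurd haH (hAnotH a h)
          · exact h.2
        · intro h; exact ⟨haI, Or.inr ⟨haH, h⟩⟩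
      have hv : τ0 a = pP a := by simp only [hτ0def]; rw [if_pos h1]
      rw [hv]
      exact beq_iff (hAQa.symm.trans (hσQ a haI).symm)
    · have hnH : a ∉ P.Ev ∩ Q.Ev := by
        intro haH
        rcases hsh a haH with ⟨_, hq⟩ | ⟨_, hnp⟩
        · exact hq haI
        · exact h1 ⟨haH.1, hnp⟩
      have hv : τ0 a = decide (a ∈ A) := by simp only [hτ0def]; rw [if_neg h1, if_neg h2]
      have hAQa : a ∈ AQ ↔ a ∈ A := by
        constructor
        · rintro ⟨_, h | h⟩
          · exact h
          · exact absurd h.1 hnH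
        · intro h; exact ⟨haI, Or.inl h⟩
      rw [hv]
      refine beq_iff ?_
      rw [decide_eq_true_eq]
      exact hAQa.symm.trans (hσQ a haI).symm
  have hτ0P : tP.1 τ0 = true := by
    rw [hlP]
    have hx : xP τ0 = xP σP := hxP τ0 σP hagP
    have hy : yP τ0 = true := (hyP τ0).mpr (fun a ha => by simp only [hτ0def]; rw [if_pos ha])
    rw [hx, hxPσ.1, hy]; rfl
  have hτ0Q : tQ.1 τ0 = true := by
    rw [hlQ]
    have hx : xQ τ0 = xQ σQ := hxQ τ0 σQ hagQ
    have hy : yQ τ0 = true := by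
      refine (hyQ τ0).mpr fun a ha => ?_
      have h1 : a ∉ P.Ev \ P.I := by
        rintro ⟨hpe, hpi⟩
        rcases hsh a ⟨hpe, ha.1⟩ with ⟨hi, _⟩ | ⟨hi, _⟩
        · exact hpi hi
        · exact ha.2 hi
      simp only [hτ0def]; rw [if_neg h1, if_pos ha]
    rw [hx, hxQσ.1, hy]; rfl
  have hτ0A : ∀ a ∈ (TS.comp P Q).I, τ0 a = true ↔ a ∈ A := by
    intro a haI
    have haH : a ∉ P.Ev ∩ Q.Ev := haI.2
    have h1 : a ∉ P.Ev \ P.I := by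
      rintro ⟨hpe, hpi⟩
      rcases haI.1 with h | h
      · exact hpi h
      · exact haH ⟨hpe, hwQ h⟩
    have h2 : a ∉ Q.Ev \ Q.I := by
      rintro ⟨hqe, hqi⟩
      rcases haI.1 with h | h
      · exact haH ⟨hwP h, hqe⟩
      · exact hqi h
    simp only [hτ0def]; rw [if_neg h1, if_neg h2, decide_eq_true_eq]
  refine ⟨⟨TS.hide (P.Ev ∩ Q.Ev) (fun σ => tP.1 σ && tQ.1 σ), (tP.2, tQ.2)⟩, ⟨?_, ?_⟩, ?_⟩
  · exact ⟨tP.1, tQ.1, htP, htQ, ⟨τ0, by show (tP.1 τ0 && tQ.1 τ0) = true; rw [hτ0P, hτ0Q]; rfl⟩, rfl⟩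
  · refine ⟨τ0, hτ0A, ?_⟩
    simp only [TS.hide, decide_eq_true_eq]
    exact ⟨τ0, fun a _ => rfl, by show (tP.1 τ0 && tQ.1 τ0) = true; rw [hτ0P, hτ0Q]; rfl⟩
  · rintro ⟨l', s'⟩ ⟨htr, hm⟩
    obtain ⟨lP, lQ, hP', hQ', _, hl'⟩ := htr
    obtain ⟨σ, hσ, hlσ⟩ := hm
    rw [hl'] at hlσ
    simp only [TS.hide, decide_eq_true_eq] at hlσ
    obtain ⟨τ, hτσ, hτ⟩ := hlσ
    obtain ⟨hτP, hτQ⟩ := Bool.and_eq_true_iff.mp hτ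
    have hmP' : Matches' P.I lP AP := by
      refine ⟨τ, ?_, hτP⟩
      intro a haI
      by_cases haH : a ∈ P.Ev ∩ Q.Ev
      · have h1 : τ a = p a := hp hQ' τ hτQ a haH haI
        rw [h1]
        constructor
        · intro hh; exact ⟨haI, Or.inr ⟨haH, hh⟩⟩
        · rintro ⟨_, hh | hh⟩
          · exact absurd haH (hAnotH a hh)
          · exact hh.2
      · have hTI : a ∈ (TS.comp P Q).I := ⟨Or.inl haI, haH⟩
        rw [hτσ a haH, hσ a hTI]
        exact ⟨fun hh => ⟨haI, Or.inl hh⟩,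
          fun hh => hh.2.resolve_right (fun h2 => haH h2.1)⟩
    have heqP := huP (lP, s'.1) ⟨hP', hmP'⟩
    have hlPeq : lP = tP.1 := congrArg Prod.fst heqP
    have hsPeq : s'.1 = tP.2 := congrArg Prod.snd heqP
    have hyτ : ∀ a ∈ P.Ev \ P.I, τ a = pP a := by
      have hh : tP.1 τ = true := by rw [← hlPeq]; exact hτP
      exact (and_pattern hlP hyP hh).2
    have hmQ' : Matches' Q.I lQ AQ := by
      refine ⟨τ, ?_, hτQ⟩
      intro a haI
      by_cases haH : a ∈ P.Ev ∩ Q.Ev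
      · have hnp : a ∉ P.I := by
          rcases hsh a haH with ⟨_, hq⟩ | ⟨_, hnp⟩
          · exact absurd haI hq
          · exact hnp
        have h1 : τ a = pP a := hyτ a ⟨haH.1, hnp⟩
        rw [h1]
        constructor
        · intro hh; exact ⟨haI, Or.inr ⟨haH, hh⟩⟩
        · rintro ⟨_, hh | hh⟩
          · exact absurd haH (hAnotH a hh)
          · exact hh.2
      · have hTI : a ∈ (TS.comp P Q).I := ⟨Or.inr haI, haH⟩
        rw [hτσ a haH, hσ a hTI]
        exact ⟨fun hh => ⟨haI, Or.inl hh⟩,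
          fun hh => hh.2.resolve_right (fun h2 => haH h2.1)⟩
    have heqQ := huQ (lQ, s'.2) ⟨hQ', hmQ'⟩
    have hlQeq : lQ = tQ.1 := congrArg Prod.fst heqQ
    have hsQeq : s'.2 = tQ.2 := congrArg Prod.snd heqQ
    subst hlPeq
    subst hlQeq
    exact Prod.ext_iff.mpr ⟨hl', Prod.ext_iff.mpr ⟨hsPeq, hsQeq⟩⟩

end Aux
section Main

open TS

variable {E : Type}

private lemma comp_I_swap (P Q : TS E) : (TS.comp Q P).I = (TS.comp P Q).I := by
  show (Q.I ∪ P.I) \ (Q.Ev ∩ P.Ev) = (P.I ∪ Q.I) \ (P.Ev ∩ Q.Ev)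
  rw [Set.union_comm, Set.inter_comm]

private lemma comp_tran_swap {P Q : TS E} {sP sP' : P.S} {sQ sQ' : Q.S} {l : BExpr E}
    (h : ((sQ, sP), l, (sQ', sP')) ∈ (TS.comp Q P).Tran) :
    ((sP, sQ), l, (sP', sQ')) ∈ (TS.comp P Q).Tran := by
  obtain ⟨lQ, lP, hQ, hP, hs, hl⟩ := h
  have hfun : (fun σ => lQ σ && lP σ) = (fun σ => lP σ && lQ σ) :=
    funext fun σ => Bool.and_comm _ _
  refine ⟨lP, lQ, hP, hQ, ?_, ?_⟩
  · rw [← hfun]; exact hs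
  · rw [hl, hfun, Set.inter_comm]

private lemma sharedOK_swap {P Q : TS E} (h : SharedOK P Q) : SharedOK Q P := by
  intro a ha
  rw [Set.inter_comm] at ha
  exact (h a ha).symm

end Main

/-- the composition of composable systems satisfies constraint 1. -/
theorem stmt5 {E : Type} (P Q : TS E) (h : TS.Composable P Q) :
    ∀ s : (TS.comp P Q).S, TS.Reach (TS.comp P Q) s →
      ∀ A : Set E, A ⊆ (TS.comp P Q).I →
        ∃! t : BExpr E × (TS.comp P Q).S,
          ((s, t.1, t.2) ∈ (TS.comp P Q).Tran ∧ Matches' (TS.comp P Q).I t.1 A) := by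
  obtain ⟨hwP, hwQ, hc1P, hc2P, _, hc1Q, hc2Q, _, hsh, _, _, hnc4Q⟩ := h
  rintro ⟨sP, sQ⟩ _ A hA
  by_cases hQ4 : Q.C4
  · obtain ⟨y, ⟨py, hy⟩, hally⟩ := hQ4 sQ
    refine aux_c1 P Q hwP hwQ hc1P hc2P hc1Q hc2Q hsh sP sQ py ?_ A hA
    intro lQ sQ' ht τ hτ a ha haI
    obtain ⟨x, _, hlx⟩ := hally ht
    have h1 : (x τ && y τ) = true := by rw [← hlx τ]; exact hτ
    have h2 : y τ = true := (Bool.and_eq_true_iff.mp h1).2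
    have hnq : a ∉ Q.I := by
      rcases hsh a ha with ⟨_, hq⟩ | ⟨_, hnp⟩
      · exact hq
      · exact absurd haI hnp
    exact (hy τ).mp h2 a ⟨ha.2, hnq⟩
  · have hH := hnc4Q hQ4
    have hp' : ∀ ⦃lP : BExpr E⦄ ⦃sP' : P.S⦄, (sP, lP, sP') ∈ P.Tran →
        ∀ τ : E → Bool, lP τ = true →
        ∀ a ∈ Q.Ev ∩ P.Ev, a ∈ Q.I → τ a = (fun _ => true) a := by
      intro lP sP' _ τ _ a ha haI
      exfalso
      rw [Set.inter_comm, hH] at ha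
      exact ha.2 haI
    have key := aux_c1 Q P hwQ hwP hc1Q hc2Q hc1P hc2P (sharedOK_swap hsh) sQ sP
      (fun _ => true) hp' A (by rw [comp_I_swap]; exact hA)
    obtain ⟨⟨l0, u0⟩, ⟨htr0, hm0⟩, huniq0⟩ := key
    obtain ⟨u1, u2⟩ := u0
    refine ⟨⟨l0, (u2, u1)⟩, ⟨comp_tran_swap htr0, by rw [← comp_I_swap]; exact hm0⟩, ?_⟩
    rintro ⟨l', v⟩ ⟨htr', hm'⟩
    obtain ⟨v1, v2⟩ := v
    have heq := huniq0 ⟨l', (v2, v1)⟩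
      ⟨comp_tran_swap htr', by rw [comp_I_swap]; exact hm'⟩
    have e1 : l' = l0 := congrArg Prod.fst heq
    have e2 : v2 = u1 := congrArg (fun t => t.2.1) heq
    have e3 : v1 = u2 := congrArg (fun t => t.2.2) heq
    subst e1; subst e2; subst e3; rfl
end
end

section
/- The composition T = P ∥ Q of two composable transition systems satisfies constraint 2: every label of T is of the form x·y with x ∈ Bool(T.I) and y ∈ Conj(T.E \ T.I). Specifically, if l = v·w·x·y with v ∈ Bool(P.I), w ∈ Conj(P.E\P.I), x ∈ Bool(Q.I), y ∈ Conj(Q.E\Q.I), then θ(l) = (v'·x')·(w'·y') with v'·x' ∈ Bool(T.I) and w'·y' ∈ Conj(T.E\T.I). -/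
open Classical

noncomputable section

/-- the composition of composable systems satisfies constraint 2: every
label of T = P ∥ Q is of the form x·y with x ∈ Bool(T.I), y ∈ Conj(T.E ∖ T.I). -/
theorem stmt6 {E : Type} (P Q : TS E) (h : TS.Composable P Q) :
    (TS.comp P Q).C2 := by
  obtain ⟨hPwf, hQwf, _, hPC2, _, _, hQC2, _, hSh, _⟩ := h
  rintro ⟨sP, sQ⟩ l ⟨sP', sQ'⟩ ⟨lP, lQ, htP, htQ, hsat, rfl⟩
  obtain ⟨xP, yP, hxP, ⟨pP, hpP⟩, hlP⟩ := hPC2 htP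
  obtain ⟨xQ, yQ, hxQ, ⟨pQ, hpQ⟩, hlQ⟩ := hQC2 htQ
  set H : Set E := P.Ev ∩ Q.Ev with hH
  set f : E → Bool := fun a => if a ∈ P.I then pQ a else pP a with hf
  set sub : (E → Bool) → (E → Bool) := fun σ a => if a ∈ H then f a else σ a with hsub
  -- any witness for the hidden existential must equal `sub σ`
  have forced : ∀ σ τ : E → Bool, (∀ a ∉ H, τ a = σ a) →
      lP τ = true → lQ τ = true → τ = sub σ := by
    intro σ τ hag hP hQ
    have hyP : yP τ = true := by
      have := hlP τ; rw [hP] at this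
      exact (Bool.and_eq_true _ _).mp this.symm |>.2
    have hyQ : yQ τ = true := by
      have := hlQ τ; rw [hQ] at this
      exact (Bool.and_eq_true _ _).mp this.symm |>.2
    funext a
    by_cases ha : a ∈ H
    · rcases hSh a ha with ⟨haPI, haQI⟩ | ⟨haQI, haPI⟩
      · have : τ a = pQ a := (hpQ τ).mp hyQ a ⟨ha.2, haQI⟩
        simp only [hsub, hf, if_pos ha, if_pos haPI, this]
      · have : τ a = pP a := (hpP τ).mp hyP a ⟨ha.1, haPI⟩
        simp only [hsub, hf, if_pos ha, if_neg haPI, this]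
    · simp only [hsub, if_neg ha, hag a ha]
  have key : ∀ σ, TS.hide H (fun τ => lP τ && lQ τ) σ = (lP (sub σ) && lQ (sub σ)) := by
    intro σ
    simp only [TS.hide]
    cases hb : lP (sub σ) && lQ (sub σ) with
    | true =>
      simp only [decide_eq_true_eq]
      exact ⟨sub σ, fun a ha => by simp only [hsub, if_neg ha], hb⟩
    | false =>
      simp only [decide_eq_false_iff_not, not_exists]
      rintro τ ⟨hag, hτ⟩
      obtain ⟨h1, h2⟩ := (Bool.and_eq_true _ _).mp hτ
      rw [forced σ τ hag h1 h2] at hτ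
      rw [hτ] at hb; exact Bool.true_eq_false.mp hb
  refine ⟨fun σ => xP (sub σ) && xQ (sub σ), fun σ => yP (sub σ) && yQ (sub σ), ?_, ?_, ?_⟩
  · -- DependsOn x T.I
    intro σ τ hag
    have hsubag : ∀ (R : Set E), R ⊆ P.I ∪ Q.I → ∀ a ∈ R, sub σ a = sub τ a := by
      intro R hR a haR
      by_cases ha : a ∈ H
      · simp only [hsub, if_pos ha]
      · simp only [hsub, if_neg ha]
        exact hag a ⟨hR haR, ha⟩
    dsimp only
    rw [hxP (sub σ) (sub τ) (hsubag P.I (Set.subset_union_left)),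
        hxQ (sub σ) (sub τ) (hsubag Q.I (Set.subset_union_right))]
  · -- IsFullConj y (T.Ev \ T.I)
    refine ⟨fun a => if a ∈ P.Ev \ P.I then pP a else pQ a, fun σ => ?_⟩
    dsimp only
    rw [Bool.and_eq_true, hpP (sub σ), hpQ (sub σ)]
    constructor
    · rintro ⟨h1, h2⟩ a ⟨⟨haEv, haH⟩, haI⟩
      have haI' : a ∉ P.I ∪ Q.I := fun hc => haI ⟨hc, haH⟩
      rcases haEv with haP | haQ
      · have haPI : a ∉ P.I := fun hc => haI' (Or.inl hc)
        have := h1 a ⟨haP, haPI⟩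
        simp only [hsub, if_neg (show a ∉ H from haH)] at this
        have hm : a ∈ P.Ev \ P.I := ⟨haP, haPI⟩
        rw [this, if_pos hm]
      · have haQI : a ∉ Q.I := fun hc => haI' (Or.inr hc)
        have := h2 a ⟨haQ, haQI⟩
        simp only [hsub, if_neg (show a ∉ H from haH)] at this
        have haPE : a ∉ P.Ev \ P.I := fun hc => haH ⟨hc.1, haQ⟩
        rw [this, if_neg haPE]
    · intro hσ
      constructor
      · intro a ⟨haP, haPI⟩
        by_cases haH : a ∈ H
        · simp only [hsub, hf, if_pos haH, if_neg haPI]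
        · simp only [hsub, if_neg haH]
          have haQI : a ∉ Q.I := fun hc => haH ⟨haP, hQwf hc⟩
          have : a ∈ (TS.comp P Q).Ev \ (TS.comp P Q).I :=
            ⟨⟨Or.inl haP, haH⟩, fun hc => (hc.1.elim haPI haQI)⟩
          have hm : a ∈ P.Ev \ P.I := ⟨haP, haPI⟩
          rw [hσ a this, if_pos hm]
      · intro a ⟨haQ, haQI⟩
        by_cases haH : a ∈ H
        · have haPI : a ∈ P.I := by
            rcases hSh a haH with ⟨h1, _⟩ | ⟨h1, _⟩
            · exact h1
            · exact absurd h1 haQI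
          simp only [hsub, hf, if_pos haH, if_pos haPI]
        · simp only [hsub, if_neg haH]
          have haPI : a ∉ P.I := fun hc => haH ⟨hPwf hc, haQ⟩
          have : a ∈ (TS.comp P Q).Ev \ (TS.comp P Q).I :=
            ⟨⟨Or.inr haQ, haH⟩, fun hc => (hc.1.elim haPI haQI)⟩
          have haPE : a ∉ P.Ev \ P.I := fun hc => haH ⟨hc.1, haQ⟩
          rw [hσ a this, if_neg haPE]
  · intro σ
    rw [key σ, hlP (sub σ), hlQ (sub σ)]
    dsimp only
    cases xP (sub σ) <;> cases yP (sub σ) <;> cases xQ (sub σ) <;> cases yQ (sub σ) <;> rfl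
end
end

section
/- The composition T = P ∥ Q satisfies constraint 4 (single output subexpression per state): for each state (s_P,s_Q) of T, all transitions from (s_P,s_Q) have labels with the same output subexpression θ(y_P)·θ(y_Q) ∈ Conj(T.E \ T.I), provided P and Q are composable (in particular, at most one of them violates constraint 4, and the violating system has all its outputs shared with the other and no inputs from the other). -/
open Classical

noncomputable section

namespace TS

variable {E : Type}

/-- A label satisfying C2's factorization depends only on the event set. -/
lemma dep_of_C2 {P : TS E} (hwf : P.WF) (h2 : P.C2) {s : P.S} {l : BExpr E} {s' : P.S}
    (ht : (s, l, s') ∈ P.Tran) : DependsOn' l P.Ev := by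
  obtain ⟨x, y, hx, ⟨py, hy⟩, hl⟩ := h2 ht
  intro σ τ hστ
  rw [hl, hl]
  have hxx : x σ = x τ := hx σ τ (fun a ha => hστ a (hwf ha))
  have hyy : y σ = y τ := by
    have hiff : y σ = true ↔ y τ = true := by
      rw [hy σ, hy τ]
      constructor <;> intro hh a ha
      · rw [← hστ a ha.1]; exact hh a ha
      · rw [hστ a ha.1]; exact hh a ha
    cases hσ : y σ <;> cases hτ : y τ
    · rfl
    · exact absurd (hiff.mpr hτ) (by simp [hσ])
    · exact absurd (hiff.mp hσ) (by simp [hτ])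
    · rfl
  rw [hxx, hyy]

/-- Key lemma: if some valuation pattern `p` is forced on the outputs of the
composition by every pair of component transitions from `s`, then the C4
condition holds at `s`. -/
lemma key (P Q : TS E) (hPwf : P.WF) (hQwf : Q.WF) (hP2 : P.C2) (hQ2 : Q.C2)
    (s : P.S × Q.S) (p : E → Bool)
    (hp : ∀ ⦃lP : BExpr E⦄ ⦃s1' : P.S⦄, (s.1, lP, s1') ∈ P.Tran →
      ∀ ⦃lQ : BExpr E⦄ ⦃s2' : Q.S⦄, (s.2, lQ, s2') ∈ Q.Tran →
      ∀ τ : E → Bool, lP τ = true → lQ τ = true →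
      ∀ a ∈ (TS.comp P Q).Ev \ (TS.comp P Q).I, τ a = p a) :
    ∃ y : BExpr E, IsFullConj y ((TS.comp P Q).Ev \ (TS.comp P Q).I) ∧
      ∀ ⦃l : BExpr E⦄ ⦃s' : (TS.comp P Q).S⦄, ((s, l, s') ∈ (TS.comp P Q).Tran →
        ∃ x : BExpr E, DependsOn' x (TS.comp P Q).I ∧ ∀ σ, l σ = (x σ && y σ)) := by
  classical
  set T := TS.comp P Q with hT
  set O : Set E := T.Ev \ T.I with hO
  set H : Set E := P.Ev ∩ Q.Ev with hH
  have hOEv : O ⊆ T.Ev := Set.diff_subset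
  have hEvH : ∀ a ∈ T.Ev, a ∉ H := by
    intro a ha
    exact ha.2
  have hIEv : T.I ⊆ T.Ev := by
    intro a ha
    refine ⟨?_, ha.2⟩
    rcases ha.1 with h | h
    · exact Or.inl (hPwf h)
    · exact Or.inr (hQwf h)
  set y : BExpr E := fun σ => decide (∀ a ∈ O, σ a = p a) with hy
  refine ⟨y, ⟨p, fun σ => by simp [hy]⟩, ?_⟩
  intro l s' ht
  obtain ⟨lP, lQ, htP, htQ, hsat, hl⟩ := ht
  have hl' : l = TS.hide H (fun σ => lP σ && lQ σ) := hl
  subst hl'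
  have depP : DependsOn' lP P.Ev := dep_of_C2 hPwf hP2 htP
  have depQ : DependsOn' lQ Q.Ev := dep_of_C2 hQwf hQ2 htQ
  set f : BExpr E := fun σ => lP σ && lQ σ with hf
  -- hide H f depends only on T.Ev
  have hideMono : ∀ σ' τ' : E → Bool, (∀ a ∈ T.Ev, σ' a = τ' a) →
      hide H f σ' = true → hide H f τ' = true := by
    intro σ' τ' hag hhide
    rw [hide, decide_eq_true_eq] at hhide ⊢
    obtain ⟨ρ, hρ, hfρ⟩ := hhide
    refine ⟨fun a => if a ∈ H then ρ a else τ' a, fun a ha => if_neg ha, ?_⟩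
    have hPag : ∀ a ∈ P.Ev, (fun a => if a ∈ H then ρ a else τ' a) a = ρ a := by
      intro a ha
      by_cases hmem : a ∈ H
      · simp [hmem]
      · have haT : a ∈ T.Ev := ⟨Or.inl ha, hmem⟩
        simp only [if_neg hmem]
        rw [← hag a haT]
        exact (hρ a hmem).symm
    have hQag : ∀ a ∈ Q.Ev, (fun a => if a ∈ H then ρ a else τ' a) a = ρ a := by
      intro a ha
      by_cases hmem : a ∈ H
      · simp [hmem]
      · have haT : a ∈ T.Ev := ⟨Or.inr ha, hmem⟩
        simp only [if_neg hmem]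
        rw [← hag a haT]
        exact (hρ a hmem).symm
    have h1 : lP (fun a => if a ∈ H then ρ a else τ' a) = lP ρ := depP _ _ hPag
    have h2 : lQ (fun a => if a ∈ H then ρ a else τ' a) = lQ ρ := depQ _ _ hQag
    simp only [hf] at hfρ ⊢
    rw [h1, h2]
    exact hfρ
  have hideDep : ∀ σ' τ' : E → Bool, (∀ a ∈ T.Ev, σ' a = τ' a) →
      hide H f σ' = hide H f τ' := by
    intro σ' τ' hag
    cases h1 : hide H f σ' <;> cases h2 : hide H f τ'
    · rfl
    · exact absurd (hideMono τ' σ' (fun a ha => (hag a ha).symm) h2) (by simp [h1])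
    · exact absurd (hideMono σ' τ' hag h1) (by simp [h2])
    · rfl
  -- the override map
  set ov : (E → Bool) → (E → Bool) := fun σ a => if a ∈ O then p a else σ a with hov
  have f1 : ∀ σ, y σ = true → ov σ = σ := by
    intro σ hyσ
    rw [hy, decide_eq_true_eq] at hyσ
    funext a
    by_cases ha : a ∈ O
    · simp only [hov, if_pos ha]
      exact (hyσ a ha).symm
    · simp [hov, ha]
  have f2 : ∀ σ, hide H f σ = true → y σ = true := by
    intro σ hlσ
    rw [hide, decide_eq_true_eq] at hlσ
    obtain ⟨τ, hτ, hfτ⟩ := hlσ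
    rw [hy, decide_eq_true_eq]
    intro a ha
    have haH : a ∉ H := hEvH a (hOEv ha)
    rw [← hτ a haH]
    simp only [hf, Bool.and_eq_true] at hfτ
    exact hp htP htQ τ hfτ.1 hfτ.2 a ha
  refine ⟨fun σ => hide H f (ov σ), ?_, ?_⟩
  · -- DependsOn' x T.I
    intro σ τ hag
    show hide H f (ov σ) = hide H f (ov τ)
    apply hideDep
    intro a ha
    by_cases haO : a ∈ O
    · simp [hov, haO]
    · have haI : a ∈ T.I := by
        by_contra hc
        exact haO ⟨ha, hc⟩
      simp only [hov, if_neg haO]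
      exact hag a haI
  · intro σ
    show hide H f σ = (hide H f (ov σ) && y σ)
    cases hyσ : y σ
    · rw [Bool.and_false]
      cases hlσ : hide H f σ
      · rfl
      · exact absurd (f2 σ hlσ) (by simp [hyσ])
    · rw [Bool.and_true, f1 σ hyσ]

end TS

/-- the composition of composable systems satisfies constraint 4. -/
theorem stmt7 {E : Type} (P Q : TS E) (h : TS.Composable P Q) :
    (TS.comp P Q).C4 := by
  classical
  obtain ⟨hPwf, hQwf, hP1, hP2, hP3, hQ1, hQ2, hQ3, hshared, hor, hPC, hQC⟩ := h
  intro s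
  -- characterize outputs of the composition
  have hOchar : ∀ a : E, a ∈ (TS.comp P Q).Ev \ (TS.comp P Q).I →
      (a ∈ P.Ev ∪ Q.Ev ∧ a ∉ P.Ev ∩ Q.Ev ∧ a ∉ P.I ∧ a ∉ Q.I) := by
    intro a ha
    obtain ⟨⟨haEv, haH⟩, haI⟩ := ha
    refine ⟨haEv, haH, ?_, ?_⟩
    · intro hc; exact haI ⟨Or.inl hc, haH⟩
    · intro hc; exact haI ⟨Or.inr hc, haH⟩
  by_cases hQ4 : Q.C4
  · by_cases hP4 : P.C4
    · -- both constraint-4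
      obtain ⟨yP, ⟨pP, hpP⟩, hfP⟩ := hP4 s.1
      obtain ⟨yQ, ⟨pQ, hpQ⟩, hfQ⟩ := hQ4 s.2
      refine TS.key P Q hPwf hQwf hP2 hQ2 s
        (fun a => if a ∈ P.Ev \ P.I then pP a else pQ a) ?_
      intro lP s1' htP lQ s2' htQ τ hlP hlQ a ha
      obtain ⟨haEv, haH, haPI, haQI⟩ := hOchar a ha
      obtain ⟨xP, _, hxP⟩ := hfP htP
      obtain ⟨xQ, _, hxQ⟩ := hfQ htQ
      have hyP : yP τ = true := by
        rw [hxP τ] at hlP; simp only [Bool.and_eq_true] at hlP; exact hlP.2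
      have hyQ : yQ τ = true := by
        rw [hxQ τ] at hlQ; simp only [Bool.and_eq_true] at hlQ; exact hlQ.2
      have hPfix := (hpP τ).mp hyP
      have hQfix := (hpQ τ).mp hyQ
      show τ a = if a ∈ P.Ev \ P.I then pP a else pQ a
      split_ifs with hif
      · exact hPfix a hif
      · have haQ : a ∈ Q.Ev := haEv.resolve_left (fun hP => hif ⟨hP, haPI⟩)
        exact hQfix a ⟨haQ, haQI⟩
    · -- P violates constraint 4
      have hH := hPC hP4
      obtain ⟨yQ, ⟨pQ, hpQ⟩, hfQ⟩ := hQ4 s.2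
      refine TS.key P Q hPwf hQwf hP2 hQ2 s pQ ?_
      intro lP s1' htP lQ s2' htQ τ hlP hlQ a ha
      obtain ⟨haEv, haH, haPI, haQI⟩ := hOchar a ha
      obtain ⟨xQ, _, hxQ⟩ := hfQ htQ
      have hyQ : yQ τ = true := by
        rw [hxQ τ] at hlQ; simp only [Bool.and_eq_true] at hlQ; exact hlQ.2
      have haQ : a ∈ Q.Ev := by
        rcases haEv with hP | hQ
        · exact absurd (hH ▸ (⟨hP, haPI⟩ : a ∈ P.Ev \ P.I)) haH
        · exact hQ
      exact (hpQ τ).mp hyQ a ⟨haQ, haQI⟩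
  · -- Q violates constraint 4
    have hP4 : P.C4 := hor.resolve_right hQ4
    have hH := hQC hQ4
    obtain ⟨yP, ⟨pP, hpP⟩, hfP⟩ := hP4 s.1
    refine TS.key P Q hPwf hQwf hP2 hQ2 s pP ?_
    intro lP s1' htP lQ s2' htQ τ hlP hlQ a ha
    obtain ⟨haEv, haH, haPI, haQI⟩ := hOchar a ha
    obtain ⟨xP, _, hxP⟩ := hfP htP
    have hyP : yP τ = true := by
      rw [hxP τ] at hlP; simp only [Bool.and_eq_true] at hlP; exact hlP.2
    have haP : a ∈ P.Ev := by
      rcases haEv with hP | hQ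
      · exact hP
      · exact absurd (hH ▸ (⟨hQ, haQI⟩ : a ∈ Q.Ev \ Q.I)) haH
    exact (hpP τ).mp hyP a ⟨haP, haPI⟩
end
end
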